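/- Let ι be a finite nonempty type, z : ι → ℝ^d a family of points, p : ι → ℝ with p(i) > 0 for all i and ∑_i p(i) = 1, and t > 0. Define w_i(x) := p(i) φ_t(x − z(i)) / ∑_j p(j) φ_t(x − z(j)), the posterior mean m(x) := ∑_i w_i(x) z(i), the posterior covariance matrix Σ(x) with entries Σ(x)_{ab} = ∑_i w_i(x) (z(i) − m(x))_a (z(i) − m(x))_b, and the kernel q_{t,i₀}(j) := ∫_{ℝ^d} w_j(x) φ_t(x − z(i₀)) dx. Then for every index i₀, ∫_{ℝ^d} tr( Σ(x)² ) φ_t(x − z(i₀)) dx ≤ ∑_j q_{t,i₀}(j) · ‖z(j) − z(i₀)‖⁴. -/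

import Mathlib

open MeasureTheory

/-- Density of the centered Gaussian `N(0, t I_d)` on `ℝ^d`. -/
noncomputable def gaussDensity (d : ℕ) (t : ℝ) (x : EuclideanSpace ℝ (Fin d)) : ℝ :=
  (2 * Real.pi * t) ^ (-(d : ℝ) / 2) * Real.exp (-‖x‖ ^ 2 / (2 * t))

lemma gauss_pos {d : ℕ} {t : ℝ} (ht : 0 < t) (x : EuclideanSpace ℝ (Fin d)) :
    0 < gaussDensity d t x := by
  unfold gaussDensity
  have : (0:ℝ) < 2 * Real.pi * t := by positivity
  positivity

lemma gauss_cont {d : ℕ} {t : ℝ} : Continuous (gaussDensity d t) := by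
  unfold gaussDensity
  fun_prop

lemma gauss_integrable {d : ℕ} {t : ℝ} (ht : 0 < t) :
    Integrable (gaussDensity d t) := by
  have h := (GaussianFourier.integrable_cexp_neg_mul_sq_norm_add (V := EuclideanSpace ℝ (Fin d))
    (b := (1/(2*t) : ℂ)) (by simp; positivity) 0 0).norm
  have heq : (fun v : EuclideanSpace ℝ (Fin d) =>
      ‖Complex.exp (-(1/(2*t):ℂ) * ‖v‖^2 + 0 * ((inner ℝ (0:EuclideanSpace ℝ (Fin d)) v : ℝ) : ℂ))‖) =
      fun v => Real.exp (-‖v‖^2 / (2*t)) := by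
    funext v
    rw [Complex.norm_exp]
    congr 1
    simp [← Complex.ofReal_pow]
    ring
  rw [heq] at h
  exact (h.const_mul _)

lemma sum_swap4 {α β : Type*} [Fintype α] [Fintype β] (f : α → α → β → β → ℝ) :
    ∑ a, ∑ b, ∑ i, ∑ j, f a b i j = ∑ i, ∑ j, ∑ a, ∑ b, f a b i j :=
  calc ∑ a, ∑ b, ∑ i, ∑ j, f a b i j
      = ∑ a, ∑ i, ∑ b, ∑ j, f a b i j :=
        Finset.sum_congr rfl fun a _ => Finset.sum_comm
    _ = ∑ i, ∑ a, ∑ b, ∑ j, f a b i j := Finset.sum_comm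
    _ = ∑ i, ∑ a, ∑ j, ∑ b, f a b i j :=
        Finset.sum_congr rfl fun i _ => Finset.sum_congr rfl fun a _ => Finset.sum_comm
    _ = ∑ i, ∑ j, ∑ a, ∑ b, f a b i j :=
        Finset.sum_congr rfl fun i _ => Finset.sum_comm

lemma trace_sum_outer {ι : Type*} [Fintype ι] {d : ℕ} (W : ι → ℝ) (u : ι → EuclideanSpace ℝ (Fin d))
    (A : Matrix (Fin d) (Fin d) ℝ) (hA : ∀ a b, A a b = ∑ i, W i * u i a * u i b) :
    Matrix.trace (A * A) = ∑ i, ∑ j, (W i * W j) * (inner ℝ (u i) (u j) : ℝ)^2 := by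
  have lhs_eq : Matrix.trace (A * A)
      = ∑ a, ∑ b, ∑ i, ∑ j, (W i * u i a * u i b) * (W j * u j b * u j a) := by
    simp only [Matrix.trace, Matrix.diag, Matrix.mul_apply, hA, Finset.sum_mul_sum]
  rw [lhs_eq, sum_swap4]
  refine Finset.sum_congr rfl fun i _ => Finset.sum_congr rfl fun j _ => ?_
  simp only [PiLp.inner_apply, RCLike.inner_apply, conj_trivial]
  rw [sq, Finset.sum_mul_sum, Finset.mul_sum]
  refine Finset.sum_congr rfl fun a _ => ?_
  rw [Finset.mul_sum]
  refine Finset.sum_congr rfl fun b _ => ?_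
  ring

lemma jensen_sq {ι : Type*} [Fintype ι] (W a : ι → ℝ) (hW : ∀ i, 0 ≤ W i)
    (h1 : ∑ i, W i = 1) : (∑ i, W i * a i)^2 ≤ ∑ i, W i * a i^2 := by
  have hcs := Finset.sum_mul_sq_le_sq_mul_sq Finset.univ (fun i => Real.sqrt (W i))
    (fun i => Real.sqrt (W i) * a i)
  calc (∑ i, W i * a i)^2 = (∑ i, Real.sqrt (W i) * (Real.sqrt (W i) * a i))^2 := by
        congr 1
        exact Finset.sum_congr rfl fun i _ => by
          rw [← mul_assoc, Real.mul_self_sqrt (hW i)]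
    _ ≤ (∑ i, Real.sqrt (W i)^2) * ∑ i, (Real.sqrt (W i) * a i)^2 := hcs
    _ = ∑ i, W i * a i^2 := by
        have h2 : ∑ i, Real.sqrt (W i)^2 = 1 := by
          rw [← h1]; exact Finset.sum_congr rfl fun i _ => Real.sq_sqrt (hW i)
        rw [h2, one_mul]
        exact Finset.sum_congr rfl fun i _ => by rw [mul_pow, Real.sq_sqrt (hW i)]

lemma double_to_sq {ι : Type*} [Fintype ι] (f : ι → ℝ) :
    ∑ i, ∑ j, f i * f j = (∑ i, f i)^2 := by
  rw [sq, Finset.sum_mul_sum]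

lemma var_min {ι : Type*} [Fintype ι] {d : ℕ} (W : ι → ℝ) (hW : ∀ i, 0 ≤ W i)
    (h1 : ∑ i, W i = 1) (z : ι → EuclideanSpace ℝ (Fin d))
    (mx c : EuclideanSpace ℝ (Fin d)) (hmx : mx = ∑ i, W i • z i) :
    ∑ i, W i * ‖z i - mx‖^2 ≤ ∑ i, W i * ‖z i - c‖^2 := by
  have hzero : ∑ i, W i • (z i - mx) = 0 := by
    simp_rw [smul_sub, Finset.sum_sub_distrib, ← Finset.sum_smul, h1, one_smul, ← hmx, sub_self]
  have hexp : ∀ i, ‖z i - c‖^2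
      = ‖z i - mx‖^2 + 2 * (inner ℝ (z i - mx) (mx - c) : ℝ) + ‖mx - c‖^2 := by
    intro i
    rw [show z i - c = (z i - mx) + (mx - c) by abel]
    exact norm_add_sq_real _ _
  have hsum : ∑ i, W i * ‖z i - c‖^2
      = ∑ i, W i * ‖z i - mx‖^2 + ‖mx - c‖^2 := by
    simp_rw [hexp, mul_add, Finset.sum_add_distrib]
    have hinner : ∑ i, W i * (2 * (inner ℝ (z i - mx) (mx - c) : ℝ))
        = 2 * (inner ℝ (∑ i, W i • (z i - mx)) (mx - c) : ℝ) := by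
      rw [sum_inner, Finset.mul_sum]
      exact Finset.sum_congr rfl fun i _ => by
        rw [real_inner_smul_left]; ring
    rw [hinner, hzero, inner_zero_left, mul_zero, add_zero, ← Finset.sum_mul, h1, one_mul]
  rw [hsum]
  exact le_add_of_nonneg_right (sq_nonneg _)

/-- For a finite mixture, the conditional expected squared-trace of the
posterior covariance is bounded by the kernel-averaged fourth moment:
`∫ tr(Σ(x)²) φ_t(x − z(i₀)) dx ≤ ∑_j q_{t,i₀}(j) ‖z(j) − z(i₀)‖⁴`. -/
theorem trace_cov_sq_le_kernel_fourth_moment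
    {ι : Type*} [Fintype ι] [Nonempty ι] {d : ℕ}
    (z : ι → EuclideanSpace ℝ (Fin d)) (p : ι → ℝ)
    (hp : ∀ i, 0 < p i) (hp1 : ∑ i, p i = 1)
    (t : ℝ) (ht : 0 < t)
    (w : ι → EuclideanSpace ℝ (Fin d) → ℝ)
    (hw : ∀ i x, w i x =
      p i * gaussDensity d t (x - z i) / ∑ j, p j * gaussDensity d t (x - z j))
    (m : EuclideanSpace ℝ (Fin d) → EuclideanSpace ℝ (Fin d))
    (hm : ∀ x, m x = ∑ i, w i x • z i)
    (Sig : EuclideanSpace ℝ (Fin d) → Matrix (Fin d) (Fin d) ℝ)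
    (hSig : ∀ x a b, Sig x a b = ∑ i, w i x * (z i - m x) a * (z i - m x) b)
    (i₀ : ι) (q : ι → ℝ)
    (hq : ∀ j, q j = ∫ x, w j x * gaussDensity d t (x - z i₀)) :
    ∫ x, Matrix.trace (Sig x * Sig x) * gaussDensity d t (x - z i₀)
      ≤ ∑ j, q j * ‖z j - z i₀‖ ^ 4 := by
  -- basic facts about the weights
  have hD : ∀ x : EuclideanSpace ℝ (Fin d), 0 < ∑ j, p j * gaussDensity d t (x - z j) := by
    intro x
    exact Finset.sum_pos (fun j _ => mul_pos (hp j) (gauss_pos ht _)) Finset.univ_nonempty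
  have hw0 : ∀ i x, 0 ≤ w i x := by
    intro i x
    rw [hw]
    exact div_nonneg (mul_pos (hp i) (gauss_pos ht _)).le (hD x).le
  have hw1 : ∀ x, ∑ i, w i x = 1 := by
    intro x
    have : ∑ i, w i x = (∑ i, p i * gaussDensity d t (x - z i)) /
        (∑ j, p j * gaussDensity d t (x - z j)) := by
      rw [Finset.sum_div]
      exact Finset.sum_congr rfl fun i _ => hw i x
    rw [this, div_self (hD x).ne']
  have hwle : ∀ i x, w i x ≤ 1 := by
    intro i x
    calc w i x ≤ ∑ j, w j x :=
          Finset.single_le_sum (fun j _ => hw0 j x) (Finset.mem_univ i)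
      _ = 1 := hw1 x
  -- the trace identity
  have htr : ∀ x, Matrix.trace (Sig x * Sig x)
      = ∑ i, ∑ j, (w i x * w j x) * (inner ℝ (z i - m x) (z j - m x) : ℝ)^2 := by
    intro x
    exact trace_sum_outer (fun i => w i x) (fun i => z i - m x) (Sig x) (hSig x)
  -- pointwise nonnegativity
  have htr0 : ∀ x, 0 ≤ Matrix.trace (Sig x * Sig x) := by
    intro x
    rw [htr x]
    refine Finset.sum_nonneg fun i _ => Finset.sum_nonneg fun j _ => ?_
    exact mul_nonneg (mul_nonneg (hw0 i x) (hw0 j x)) (sq_nonneg _)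
  -- the pointwise key bound
  have key : ∀ x, Matrix.trace (Sig x * Sig x) ≤ ∑ j, w j x * ‖z j - z i₀‖^4 := by
    intro x
    rw [htr x]
    calc ∑ i, ∑ j, (w i x * w j x) * (inner ℝ (z i - m x) (z j - m x) : ℝ)^2
        ≤ ∑ i, ∑ j, (w i x * ‖z i - m x‖^2) * (w j x * ‖z j - m x‖^2) := by
          refine Finset.sum_le_sum fun i _ => Finset.sum_le_sum fun j _ => ?_
          have hcs : (inner ℝ (z i - m x) (z j - m x) : ℝ)^2
              ≤ (‖z i - m x‖ * ‖z j - m x‖)^2 := by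
            rw [← sq_abs]
            exact pow_le_pow_left₀ (abs_nonneg _) (abs_real_inner_le_norm _ _) 2
          calc (w i x * w j x) * (inner ℝ (z i - m x) (z j - m x) : ℝ)^2
              ≤ (w i x * w j x) * (‖z i - m x‖ * ‖z j - m x‖)^2 :=
                mul_le_mul_of_nonneg_left hcs (mul_nonneg (hw0 i x) (hw0 j x))
            _ = (w i x * ‖z i - m x‖^2) * (w j x * ‖z j - m x‖^2) := by ring
      _ = (∑ i, w i x * ‖z i - m x‖^2)^2 := double_to_sq _
      _ ≤ (∑ i, w i x * ‖z i - z i₀‖^2)^2 := by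
          refine pow_le_pow_left₀ ?_ ?_ 2
          · exact Finset.sum_nonneg fun i _ => mul_nonneg (hw0 i x) (sq_nonneg _)
          · exact var_min (fun i => w i x) (fun i => hw0 i x) (hw1 x) z (m x) (z i₀) (hm x)
      _ ≤ ∑ i, w i x * (‖z i - z i₀‖^2)^2 :=
          jensen_sq (fun i => w i x) (fun i => ‖z i - z i₀‖^2) (fun i => hw0 i x) (hw1 x)
      _ = ∑ j, w j x * ‖z j - z i₀‖^4 := by
          exact Finset.sum_congr rfl fun i _ => by ring
  -- integrability facts
  have hφint : Integrable (fun x : EuclideanSpace ℝ (Fin d) => gaussDensity d t (x - z i₀)) :=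
    (gauss_integrable ht).comp_sub_right _
  have hwcont : ∀ j, Continuous (w j) := by
    intro j
    have hwe : w j = fun x => p j * gaussDensity d t (x - z j)
        / ∑ k, p k * gaussDensity d t (x - z k) := funext (hw j)
    rw [hwe]
    refine Continuous.div ?_ ?_ fun x => (hD x).ne'
    · exact continuous_const.mul (gauss_cont.comp (continuous_id.sub continuous_const))
    · exact continuous_finset_sum _ fun k _ =>
        continuous_const.mul (gauss_cont.comp (continuous_id.sub continuous_const))
  have hwφint : ∀ j, Integrable (fun x => w j x * gaussDensity d t (x - z i₀)) := by
    intro j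
    refine hφint.mono ?_ ?_
    · exact ((hwcont j).mul (gauss_cont.comp (continuous_id.sub continuous_const))).aestronglyMeasurable
    · filter_upwards with x
      rw [Real.norm_eq_abs, Real.norm_eq_abs,
        abs_of_nonneg (mul_nonneg (hw0 j x) (gauss_pos ht _).le),
        abs_of_nonneg (gauss_pos ht _).le]
      exact mul_le_of_le_one_left (gauss_pos ht _).le (hwle j x)
  have hsplit : (fun x => (∑ j, w j x * ‖z j - z i₀‖^4) * gaussDensity d t (x - z i₀))
      = fun x => ∑ j, ‖z j - z i₀‖^4 * (w j x * gaussDensity d t (x - z i₀)) := by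
    funext x
    rw [Finset.sum_mul]
    exact Finset.sum_congr rfl fun j _ => by ring
  have hgint : Integrable
      (fun x => (∑ j, w j x * ‖z j - z i₀‖^4) * gaussDensity d t (x - z i₀)) := by
    rw [hsplit]
    exact integrable_finset_sum _ fun j _ => (hwφint j).const_mul _
  calc ∫ x, Matrix.trace (Sig x * Sig x) * gaussDensity d t (x - z i₀)
      ≤ ∫ x, (∑ j, w j x * ‖z j - z i₀‖^4) * gaussDensity d t (x - z i₀) := by
        refine integral_mono_of_nonneg ?_ hgint ?_
        · filter_upwards with x
          exact mul_nonneg (htr0 x) (gauss_pos ht _).le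
        · filter_upwards with x
          exact mul_le_mul_of_nonneg_right (key x) (gauss_pos ht _).le
    _ = ∑ j, q j * ‖z j - z i₀‖^4 := by
        rw [hsplit, integral_finset_sum _ fun j _ => (hwφint j).const_mul _]
        refine Finset.sum_congr rfl fun j _ => ?_
        rw [integral_const_mul, ← hq j]
        ring
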